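/- arXiv:2505.20766 — 2 statements merged into one kernel-verified Lean document; each statement's English description precedes it below -/
import Mathlib

section
/- Let δ > 0, u₁ < 0 and Ω₀ > 0. Let r, Ω, p : [0,δ] → ℝ be continuous and h : [0,δ] → ℝ be C¹, and suppose: (1/2)|u₁| ≤ r(v) ≤ 2|u₁| and 0 < Ω(v) ≤ 2Ω₀ for all v ∈ [0,δ]; h(0) ≤ 1; h′(v) ≤ −r(v) Ω(v)⁻² p(v)² for all v ∈ [0,δ]; and ∫₀^δ r(v)² p(v)² dv ≥ 16 Ω₀² |u₁|. Then h(δ) ≤ −1 < 0. -/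
/-- **The trapping mechanism along an outgoing cone**: with `r` comparable to `|u₁|`,
`0 < Ω ≤ 2Ω₀`, the normalized outgoing expansion `h` satisfying `h(0) ≤ 1`
(nonnegativity of the initial Hawking mass) and the Raychaudhuri inequality
`h′ ≤ −rΩ⁻²p²`, the scalar-field flux lower bound `∫₀^δ r²p² ≥ 16Ω₀²|u₁|` forces
`h(δ) ≤ −1 < 0`, i.e. the final sphere is trapped in the outgoing direction. -/
theorem trapping_mechanism (δ u₁ Ω₀ : ℝ) (hδ : 0 < δ) (hu₁ : u₁ < 0) (hΩ₀ : 0 < Ω₀)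
    (r Ω p h : ℝ → ℝ)
    (hrc : ContinuousOn r (Set.Icc 0 δ))
    (hΩc : ContinuousOn Ω (Set.Icc 0 δ))
    (hpc : ContinuousOn p (Set.Icc 0 δ))
    (hr : ∀ v ∈ Set.Icc (0 : ℝ) δ, |u₁| / 2 ≤ r v ∧ r v ≤ 2 * |u₁|)
    (hΩ : ∀ v ∈ Set.Icc (0 : ℝ) δ, 0 < Ω v ∧ Ω v ≤ 2 * Ω₀)
    (hh0 : h 0 ≤ 1)
    (hC1 : ContDiffOn ℝ 1 h (Set.Icc 0 δ))
    (hdiff : ∀ v ∈ Set.Icc (0 : ℝ) δ, DifferentiableAt ℝ h v)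
    (hineq : ∀ v ∈ Set.Icc (0 : ℝ) δ, deriv h v ≤ -(r v) / (Ω v) ^ 2 * (p v) ^ 2)
    (hflux : 16 * Ω₀ ^ 2 * |u₁| ≤ ∫ v in (0 : ℝ)..δ, (r v) ^ 2 * (p v) ^ 2) :
    h δ ≤ -1 ∧ h δ < 0 := by
  have hu : 0 < |u₁| := abs_pos.mpr (ne_of_lt hu₁)
  set K : ℝ := 8 * Ω₀ ^ 2 * |u₁| with hK
  have hKpos : 0 < K := by positivity
  -- continuity of deriv h on Icc
  have hud : UniqueDiffOn ℝ (Set.Icc (0:ℝ) δ) := uniqueDiffOn_Icc hδ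
  have hderivc : ContinuousOn (deriv h) (Set.Icc 0 δ) := by
    have h1 : ContinuousOn (derivWithin h (Set.Icc 0 δ)) (Set.Icc 0 δ) :=
      hC1.continuousOn_derivWithin hud le_rfl
    exact h1.congr fun x hx => ((hdiff x hx).derivWithin (hud x hx)).symm
  have hΩne : ∀ v ∈ Set.Icc (0:ℝ) δ, (Ω v) ^ 2 ≠ 0 := fun v hv =>
    pow_ne_zero _ (ne_of_gt (hΩ v hv).1)
  have hgc : ContinuousOn (fun v => -(r v) / (Ω v) ^ 2 * (p v) ^ 2) (Set.Icc 0 δ) :=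
    ((hrc.neg.div (hΩc.pow 2) hΩne).mul (hpc.pow 2))
  have hfc : ContinuousOn (fun v => -(1 / K) * ((r v) ^ 2 * (p v) ^ 2)) (Set.Icc 0 δ) :=
    (continuousOn_const.mul ((hrc.pow 2).mul (hpc.pow 2)))
  have hIg : IntervalIntegrable (fun v => -(r v) / (Ω v) ^ 2 * (p v) ^ 2) MeasureTheory.volume 0 δ :=
    hgc.intervalIntegrable_of_Icc hδ.le
  have hIf : IntervalIntegrable (fun v => -(1 / K) * ((r v) ^ 2 * (p v) ^ 2)) MeasureTheory.volume 0 δ :=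
    hfc.intervalIntegrable_of_Icc hδ.le
  have hId : IntervalIntegrable (deriv h) MeasureTheory.volume 0 δ :=
    hderivc.intervalIntegrable_of_Icc hδ.le
  -- FTC
  have hftc : (∫ v in (0:ℝ)..δ, deriv h v) = h δ - h 0 := by
    apply intervalIntegral.integral_deriv_eq_sub
    · intro v hv
      exact hdiff v (by rwa [Set.uIcc_of_le hδ.le] at hv)
    · exact hId
  -- first comparison
  have h1 : (∫ v in (0:ℝ)..δ, deriv h v) ≤
      ∫ v in (0:ℝ)..δ, -(r v) / (Ω v) ^ 2 * (p v) ^ 2 :=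
    intervalIntegral.integral_mono_on hδ.le hId hIg hineq
  -- second comparison: pointwise
  have h2 : (∫ v in (0:ℝ)..δ, -(r v) / (Ω v) ^ 2 * (p v) ^ 2) ≤
      ∫ v in (0:ℝ)..δ, -(1 / K) * ((r v) ^ 2 * (p v) ^ 2) := by
    apply intervalIntegral.integral_mono_on hδ.le hIg hIf
    intro v hv
    obtain ⟨hr1, hr2⟩ := hr v hv
    obtain ⟨hΩ1, hΩ2⟩ := hΩ v hv
    have hrpos : 0 < r v := lt_of_lt_of_le (by positivity) hr1
    have hΩsq : (Ω v) ^ 2 ≤ 4 * Ω₀ ^ 2 := by nlinarith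
    have hrΩ : r v * (Ω v) ^ 2 ≤ K := by
      rw [hK]; nlinarith [sq_nonneg (Ω v)]
    -- -(r)/(Ω²) * p² ≤ -(1/K) * (r² p²)
    have key : (r v) ^ 2 / K ≤ r v / (Ω v) ^ 2 := by
      rw [div_le_div_iff₀ hKpos (by positivity)]
      nlinarith
    have hp2 : (0:ℝ) ≤ (p v) ^ 2 := sq_nonneg _
    have : -(r v / (Ω v)^2) ≤ -((r v)^2 / K) := neg_le_neg key
    calc -(r v) / (Ω v) ^ 2 * (p v) ^ 2 = -(r v / (Ω v)^2) * (p v)^2 := by ring_nf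
      _ ≤ -((r v)^2 / K) * (p v)^2 := mul_le_mul_of_nonneg_right this hp2
      _ = -(1 / K) * ((r v) ^ 2 * (p v) ^ 2) := by ring
  have h3 : (∫ v in (0:ℝ)..δ, -(1 / K) * ((r v) ^ 2 * (p v) ^ 2)) ≤ -2 := by
    rw [intervalIntegral.integral_const_mul]
    have : -(1 / K) * (16 * Ω₀ ^ 2 * |u₁|) = -2 := by
      field_simp [hK]; ring
    calc -(1 / K) * ∫ v in (0:ℝ)..δ, (r v) ^ 2 * (p v) ^ 2
        ≤ -(1 / K) * (16 * Ω₀ ^ 2 * |u₁|) := by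
          apply mul_le_mul_of_nonpos_left hflux
          simp only [neg_nonpos]
          positivity
      _ = -2 := this
  have hfin : h δ ≤ -1 := by
    have := hftc ▸ (h1.trans (h2.trans h3))
    linarith
  exact ⟨hfin, lt_of_le_of_lt hfin (by norm_num)⟩
end

section
/- Let α > 0, 0 < δ ≤ 1 and 0 < t ≤ 1/√8. Let δ′ ∈ (0,δ) satisfy ∫_{δ′}^{δ} x^{2α} dx = (1/2) ∫₀^{δ} x^{2α} dx. Let ψ, g : [0,δ] → ℝ be continuous with ψ(x) ≥ 0 for all x ∈ [0,δ], ψ(x) ≥ t x^α for all x ∈ [δ′,δ], and |g(x) − ψ(x)| ≤ t² x^α for all x ∈ [0,δ]. Then ∫₀^{δ} g(x)² dx ≥ (t²/8) ∫₀^{δ} x^{2α} dx. -/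
/-- **Genericity of the trapping data**: if `ψ ≥ 0` on `[0,δ]` satisfies `ψ(x) ≥ t x^α`
on `[δ′,δ]`, where `δ′` splits the integral `∫₀^δ x^{2α}` in half, and `g` is within
pointwise weighted distance `|g − ψ| ≤ t² x^α` of `ψ`, then the flux of `g` still
satisfies the lower bound `∫₀^δ g² ≥ (t²/8) ∫₀^δ x^{2α}`. -/
theorem genericity_of_flux_lower_bound (α δ t δ' : ℝ)
    (hα : 0 < α) (hδ0 : 0 < δ) (hδ1 : δ ≤ 1)
    (ht0 : 0 < t) (ht : t ≤ 1 / Real.sqrt 8)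
    (hδ'0 : 0 < δ') (hδ'δ : δ' < δ)
    (hhalf : ∫ x in δ'..δ, x ^ (2 * α) = 1 / 2 * ∫ x in (0 : ℝ)..δ, x ^ (2 * α))
    (ψ g : ℝ → ℝ)
    (hψc : ContinuousOn ψ (Set.Icc 0 δ))
    (hgc : ContinuousOn g (Set.Icc 0 δ))
    (hψ0 : ∀ x ∈ Set.Icc (0 : ℝ) δ, 0 ≤ ψ x)
    (hψlb : ∀ x ∈ Set.Icc δ' δ, t * x ^ α ≤ ψ x)
    (hclose : ∀ x ∈ Set.Icc (0 : ℝ) δ, |g x - ψ x| ≤ t ^ 2 * x ^ α) :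
    t ^ 2 / 8 * ∫ x in (0 : ℝ)..δ, x ^ (2 * α) ≤ ∫ x in (0 : ℝ)..δ, (g x) ^ 2 := by
  have hδ'le : δ' ≤ δ := le_of_lt hδ'δ
  have ht2 : t ≤ 1 / 2 := by
    refine ht.trans ?_
    rw [div_le_div_iff₀ (by positivity) (by norm_num)]
    nlinarith [Real.sq_sqrt (by norm_num : (8:ℝ) ≥ 0), Real.sqrt_nonneg 8]
  have hsub : Set.Icc δ' δ ⊆ Set.Icc 0 δ :=
    Set.Icc_subset_Icc (le_of_lt hδ'0) le_rfl
  -- pointwise bound on [δ', δ]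
  have hpt : ∀ x ∈ Set.Icc δ' δ, t / 2 * x ^ α ≤ g x := by
    intro x hx
    have hx0 : (0:ℝ) ≤ x := le_trans (le_of_lt hδ'0) hx.1
    have hxa : (0:ℝ) ≤ x ^ α := Real.rpow_nonneg hx0 α
    have h1 := hψlb x hx
    have h2 := (abs_le.mp (hclose x (hsub hx))).1
    nlinarith [mul_nonneg (mul_nonneg ht0.le (by linarith : (0:ℝ) ≤ 1/2 - t)) hxa]
  -- integrability
  have hInt2α : ∀ a b : ℝ, IntervalIntegrable (fun x => x ^ (2*α)) MeasureTheory.volume a b := by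
    intro a b
    exact intervalIntegral.intervalIntegrable_rpow' (by linarith)
  have hgInt : IntervalIntegrable (fun x => (g x)^2) MeasureTheory.volume δ' δ := by
    apply ContinuousOn.intervalIntegrable
    apply ((hgc.mono hsub).pow 2).mono
    rw [Set.uIcc_of_le hδ'le]
  have hgInt0 : IntervalIntegrable (fun x => (g x)^2) MeasureTheory.volume 0 δ' := by
    apply ContinuousOn.intervalIntegrable
    apply (hgc.pow 2).mono
    rw [Set.uIcc_of_le (le_of_lt hδ'0)]
    exact Set.Icc_subset_Icc le_rfl hδ'le
  -- compare integrals on [δ', δ]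
  have hmono : ∫ x in δ'..δ, t^2/4 * x ^ (2*α) ≤ ∫ x in δ'..δ, (g x)^2 := by
    apply intervalIntegral.integral_mono_on hδ'le ((hInt2α δ' δ).const_mul _) hgInt
    intro x hx
    have hx0 : (0:ℝ) ≤ x := le_trans (le_of_lt hδ'0) hx.1
    have hxa : (0:ℝ) ≤ x ^ α := Real.rpow_nonneg hx0 α
    have h := hpt x hx
    have hsq : (t/2 * x ^ α)^2 ≤ (g x)^2 := by
      apply sq_le_sq'
      · nlinarith
      · exact h
    calc t^2/4 * x ^ (2*α) = (t/2 * x ^ α)^2 := by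
          rw [mul_comm 2 α, Real.rpow_mul hx0, Real.rpow_two]
          ring
      _ ≤ (g x)^2 := hsq
  have hsplit : ∫ x in (0:ℝ)..δ, (g x)^2
      = (∫ x in (0:ℝ)..δ', (g x)^2) + ∫ x in δ'..δ, (g x)^2 :=
    (intervalIntegral.integral_add_adjacent_intervals hgInt0 hgInt).symm
  have hfirst : 0 ≤ ∫ x in (0:ℝ)..δ', (g x)^2 := by
    apply intervalIntegral.integral_nonneg (le_of_lt hδ'0)
    intro x _
    positivity
  have hconst : ∫ x in δ'..δ, t^2/4 * x ^ (2*α)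
      = t^2/4 * ∫ x in δ'..δ, x ^ (2*α) :=
    intervalIntegral.integral_const_mul _ _
  rw [hsplit]
  have : t^2/4 * ∫ x in δ'..δ, x ^ (2*α)
      = t^2/8 * ∫ x in (0:ℝ)..δ, x ^ (2*α) := by
    rw [hhalf]; ring
  linarith [hmono, hconst ▸ hmono]
end
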